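/- Let ε ∈ (0, 1/e], let k := ⌈2·ln(1/ε)⌉, and consider the continuous-time prophet secretary setup with k copies for Borel probability measures F₁,…,Fₙ on [0,∞) with continuous CDFs. Let τ ∈ [0,∞) be a real number such that P(OPT ≤ τ) = 1/2, and let ALG_τ be the value of the single-threshold algorithm with constant threshold τ. Then for every x ≥ 0, P(ALG_τ > x) ≥ (1 − ε)·P(OPT > x), and consequently E[ALG_τ] ≥ (1 − ε)·E[OPT]. -/

import Mathlib

open MeasureTheory ProbabilityTheory
open scoped ENNReal
open MeasureTheory ProbabilityTheory

lemma bern_aux {p a : ℝ} (hp0 : 0 ≤ p) (hp1 : p ≤ 1) (ha0 : 0 ≤ a) (ha1 : a ≤ 1) :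
    (1 - p) ^ a ≤ 1 - p * a := by
  have h := rpow_one_add_le_one_add_mul_self (s := -p) (by linarith) ha0 ha1
  rw [show (1 : ℝ) + -p = 1 - p by ring] at h
  calc (1 - p) ^ a ≤ 1 + a * (-p) := h
    _ = 1 - p * a := by ring

lemma weier {ι : Type*} (s : Finset ι) (f : ι → ℝ) (h0 : ∀ i ∈ s, 0 ≤ f i)
    (h1 : ∀ i ∈ s, f i ≤ 1) : 1 - ∑ i ∈ s, f i ≤ ∏ i ∈ s, (1 - f i) := by
  induction s using Finset.cons_induction with
  | empty => simp
  | cons a s ha ih =>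
    rw [Finset.prod_cons, Finset.sum_cons]
    have h0a := h0 a (Finset.mem_cons_self a s)
    have h1a := h1 a (Finset.mem_cons_self a s)
    have ih' := ih (fun i hi => h0 i (Finset.mem_cons_of_mem hi))
      (fun i hi => h1 i (Finset.mem_cons_of_mem hi))
    have hsum : 0 ≤ ∑ i ∈ s, f i := Finset.sum_nonneg (fun i hi => h0 i (Finset.mem_cons_of_mem hi))
    nlinarith


lemma half_le_exp_neg_half : (1/2 : ℝ) ≤ Real.exp (-(1/2)) := by
  rw [Real.exp_neg]
  have hmul : Real.exp (1/2) * Real.exp (1/2) = Real.exp 1 := by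
    rw [← Real.exp_add]; norm_num
  have h2 : Real.exp (1/2) ≤ 2 := by nlinarith [Real.exp_one_lt_d9.le, Real.exp_pos (1/2 : ℝ)]
  rw [le_inv_comm₀ (by norm_num) (Real.exp_pos _)]
  simpa using h2

lemma pow_half_le_exp (k : ℕ) : (1/2:ℝ)^k ≤ Real.exp (-(k:ℝ)/2) := by
  have h := pow_le_pow_left₀ (by norm_num : (0:ℝ) ≤ 1/2) half_le_exp_neg_half k
  rwa [← Real.exp_nat_mul, show (k:ℝ) * -(1/2) = -(k:ℝ)/2 by ring] at h

lemma key_num (k : ℕ) (hk0 : 0 < k) :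
    1 - Real.exp (-(k:ℝ)/2) ≤
      (k:ℝ) * ∑ l ∈ Finset.range (3*k), (1/(3*(k:ℝ))) * ((1/2:ℝ) ^ ((1:ℝ)/3)) ^ (l+1) := by
  set r : ℝ := (1/2:ℝ) ^ ((1:ℝ)/3) with hrdef
  have hr0 : 0 < r := Real.rpow_pos_of_pos (by norm_num) _
  have hr3 : r ^ (3:ℕ) = 1/2 := by
    rw [hrdef, ← Real.rpow_natCast ((1/2:ℝ) ^ ((1:ℝ)/3)) 3, ← Real.rpow_mul (by norm_num)]
    norm_num
  have hr1 : r < 1 := Real.rpow_lt_one (by norm_num) (by norm_num) (by norm_num)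
  have hr34 : 3/4 ≤ r := by
    refine le_of_pow_le_pow_left₀ (by norm_num) hr0.le (n := 3) ?_
    rw [hr3]; norm_num
  set q : ℝ := (1/2:ℝ)^k with hq
  set E : ℝ := Real.exp (-(k:ℝ)/2) with hE
  have hqE : q ≤ E := pow_half_le_exp k
  have hE1 : E ≤ 1 := by
    rw [hE, Real.exp_le_one_iff]
    have : (0:ℝ) ≤ (k:ℝ) := Nat.cast_nonneg k
    linarith
  have hsum : ∑ l ∈ Finset.range (3*k), (1/(3*(k:ℝ))) * r ^ (l+1)
      = (1/(3*(k:ℝ))) * (r * ((q - 1)/(r - 1))) := by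
    rw [← Finset.mul_sum]
    congr 1
    have : ∀ l, r ^ (l+1) = r * r ^ l := fun l => by ring
    simp_rw [this]
    rw [← Finset.mul_sum, geom_sum_eq hr1.ne (3*k), pow_mul, hr3, ← hq]
  have hdiv : (q - 1)/(r - 1) = (1-q)/(1-r) := by
    rw [show (1-q) = -(q-1) by ring, show (1-r) = -(r-1) by ring, neg_div_neg_eq]
  have hkne : (k:ℝ) ≠ 0 := by positivity
  have hk13 : (k:ℝ) * (1/(3*(k:ℝ))) = 1/3 := by
    field_simp
  have hkmul : (k:ℝ) * ((1/(3*(k:ℝ))) * (r * ((1 - q)/(1 - r)))) = 1/3 * (r * ((1-q)/(1-r))) := by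
    rw [← mul_assoc, hk13]
  rw [hsum, hdiv, hkmul]
  have h1r : 0 < 1 - r := by linarith
  rw [← sub_nonneg]
  have key : 0 ≤ r * (1 - q) - 3 * (1 - r) * (1 - E) := by
    nlinarith [mul_le_mul_of_nonneg_left (by linarith : 1-E ≤ 1-q) (by linarith : (0:ℝ) ≤ 3*(1-r)),
      mul_le_mul_of_nonneg_right (by linarith : 3*(1-r) ≤ r) (by linarith : (0:ℝ) ≤ 1-q)]
  have heq : 1/3 * (r * ((1-q)/(1-r))) - (1 - E)
      = (r * (1 - q) - 3 * (1 - r) * (1 - E)) / (1-r) / 3 := by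
    field_simp
  rw [heq]
  positivity

lemma grid_cell_measure
    {k n : ℕ}
    {Ω : Type*} [MeasurableSpace Ω] {μ : Measure Ω}
    (F : Fin n → Measure ℝ)
    (V : Fin n → Fin k → Ω → ℝ) (t : Fin n → Fin k → Ω → ℝ)
    (hmV : ∀ i j, Measurable (V i j)) (hmt : ∀ i j, Measurable (t i j))
    (hVdist : ∀ i j, Measure.map (V i j) μ = F i)
    (htdist : ∀ i j, Measure.map (t i j) μ = volume.restrict (Set.Icc (0:ℝ) 1))
    (hindep : iIndepFun
      (Sum.elim (fun p : Fin n × Fin k => V p.1 p.2) (fun p : Fin n × Fin k => t p.1 p.2)) μ)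
    (τ x a b : ℝ) (hb : 0 ≤ b) (hba : b ≤ a) (ha : a ≤ 1)
    (e : Fin n × Fin k) :
    μ ((V e.1 e.2 ⁻¹' Set.Ioi x) ∩ (t e.1 e.2 ⁻¹' Set.Ioc b a) ∩
       ⋂ f ∈ Finset.univ.erase e, ((V f.1 f.2 ⁻¹' Set.Iic τ) ∪ (t f.1 f.2 ⁻¹' Set.Ioi a)))
    = F e.1 (Set.Ioi x) * ENNReal.ofReal (a - b) *
      ∏ f ∈ Finset.univ.erase e,
        (F f.1 (Set.Ioi τ) * ENNReal.ofReal (1 - a) + F f.1 (Set.Iic τ)) := by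
  classical
  have hprod := iIndepFun_iff_measure_inter_preimage_eq_mul.mp hindep
  have hVm : ∀ (f : Fin n × Fin k) (s : Set ℝ), MeasurableSet s →
      μ (V f.1 f.2 ⁻¹' s) = F f.1 s := by
    intro f s hs
    rw [← hVdist f.1 f.2, Measure.map_apply (hmV f.1 f.2) hs]
  have htm : ∀ (f : Fin n × Fin k) (s : Set ℝ), MeasurableSet s →
      μ (t f.1 f.2 ⁻¹' s) = volume (s ∩ Set.Icc (0:ℝ) 1) := by
    intro f s hs
    rw [← Measure.restrict_apply hs, ← htdist f.1 f.2, Measure.map_apply (hmt f.1 f.2) hs]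
  have htIoc : ∀ f : Fin n × Fin k, μ (t f.1 f.2 ⁻¹' Set.Ioc b a) = ENNReal.ofReal (a - b) := by
    intro f
    rw [htm f _ measurableSet_Ioc]
    rw [Set.inter_eq_left.mpr (Set.Ioc_subset_Icc_self.trans (Set.Icc_subset_Icc hb ha))]
    exact Real.volume_Ioc
  have htIoi : ∀ f : Fin n × Fin k, μ (t f.1 f.2 ⁻¹' Set.Ioi a) = ENNReal.ofReal (1 - a) := by
    intro f
    rw [htm f _ measurableSet_Ioi]
    have : Set.Ioi a ∩ Set.Icc (0:ℝ) 1 = Set.Ioc a 1 := by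
      ext z
      simp only [Set.mem_inter_iff, Set.mem_Ioi, Set.mem_Icc, Set.mem_Ioc]
      constructor
      · rintro ⟨h1, _, h3⟩; exact ⟨h1, h3⟩
      · rintro ⟨h1, h2⟩; exact ⟨h1, le_trans (le_trans hb hba) (le_of_lt h1), h2⟩
    rw [this, Real.volume_Ioc]
  set u : Finset (Fin n × Fin k) := Finset.univ.erase e with hu
  set C : Finset (Fin n × Fin k) → Set Ω := fun S =>
    (V e.1 e.2 ⁻¹' Set.Ioi x) ∩ (t e.1 e.2 ⁻¹' Set.Ioc b a) ∩
    (⋂ f ∈ S, ((V f.1 f.2 ⁻¹' Set.Ioi τ) ∩ (t f.1 f.2 ⁻¹' Set.Ioi a))) ∩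
    (⋂ f ∈ u \ S, V f.1 f.2 ⁻¹' Set.Iic τ) with hC
  -- decomposition
  have hBC : (V e.1 e.2 ⁻¹' Set.Ioi x) ∩ (t e.1 e.2 ⁻¹' Set.Ioc b a) ∩
       (⋂ f ∈ u, ((V f.1 f.2 ⁻¹' Set.Iic τ) ∪ (t f.1 f.2 ⁻¹' Set.Ioi a)))
      = ⋃ S ∈ u.powerset, C S := by
    ext ω
    simp only [hC, Set.mem_iUnion, Set.mem_inter_iff, Set.mem_iInter, Set.mem_union,
      Set.mem_preimage, Set.mem_Ioi, Set.mem_Ioc, Set.mem_Iic, Finset.mem_powerset,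
      Finset.mem_sdiff]
    constructor
    · rintro ⟨⟨h1, h2⟩, h3⟩
      refine ⟨u.filter (fun f => τ < V f.1 f.2 ω), Finset.filter_subset _ _,
        ⟨⟨⟨h1, h2⟩, ?_⟩, ?_⟩⟩
      · intro f hf
        have hf' := Finset.mem_filter.mp hf
        rcases h3 f hf'.1 with h | h
        · exact absurd hf'.2 (not_lt.mpr h)
        · exact ⟨hf'.2, h⟩
      · intro f hf
        rcases hf with ⟨hfu, hfn⟩
        by_contra hlt
        exact hfn (Finset.mem_filter.mpr ⟨hfu, not_le.mp hlt⟩)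
    · rintro ⟨S, hS, ⟨⟨⟨h1, h2⟩, h3⟩, h4⟩⟩
      refine ⟨⟨h1, h2⟩, fun f hf => ?_⟩
      by_cases hfS : f ∈ S
      · exact Or.inr (h3 f hfS).2
      · exact Or.inl (h4 f ⟨hf, hfS⟩)
  rw [hBC]
  -- measure of each cell
  have hCmeas : ∀ S ∈ u.powerset, MeasurableSet (C S) := by
    intro S _
    refine (((hmV e.1 e.2 measurableSet_Ioi).inter (hmt e.1 e.2 measurableSet_Ioc)).inter
      (MeasurableSet.biInter (Set.to_countable _) (fun f _ =>
        (hmV f.1 f.2 measurableSet_Ioi).inter (hmt f.1 f.2 measurableSet_Ioi)))).inter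
      (MeasurableSet.biInter (Set.to_countable _) (fun f _ => hmV f.1 f.2 measurableSet_Iic))
  have hdisj : (↑u.powerset : Set (Finset (Fin n × Fin k))).PairwiseDisjoint C := by
    have key : ∀ S₁ S₂ : Finset (Fin n × Fin k), S₁ ⊆ u → S₂ ⊆ u → ∀ f, f ∈ S₁ → f ∉ S₂ →
        Disjoint (C S₁) (C S₂) := by
      intro S₁ S₂ hS₁u hS₂u f hf1 hf2
      rw [Set.disjoint_left]
      rintro ω ⟨⟨_, h3⟩, _⟩ ⟨_, h4⟩
      have hV1 : τ < V f.1 f.2 ω := (Set.mem_iInter₂.mp h3 f hf1).1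
      have hfu : f ∈ u \ S₂ := Finset.mem_sdiff.mpr ⟨hS₁u hf1, hf2⟩
      have hV2 : V f.1 f.2 ω ≤ τ := Set.mem_iInter₂.mp h4 f hfu
      exact absurd hV2 (not_le.mpr hV1)
    intro S hS Sb hSb hne
    have hSu2 : S ⊆ u := Finset.mem_powerset.mp (Finset.mem_coe.mp hS)
    have hSu3 : Sb ⊆ u := Finset.mem_powerset.mp (Finset.mem_coe.mp hSb)
    rcases (by
      by_contra h
      push_neg at h
      exact hne (Finset.Subset.antisymm h.1 h.2) : ¬ S ⊆ Sb ∨ ¬ Sb ⊆ S) with h | h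
    · obtain ⟨f, hf1, hf2⟩ := Finset.not_subset.mp h
      exact key S Sb hSu2 hSu3 f hf1 hf2
    · obtain ⟨f, hf1, hf2⟩ := Finset.not_subset.mp h
      exact (key Sb S hSu3 hSu2 f hf1 hf2).symm
  rw [measure_biUnion_finset hdisj hCmeas]
  have hCval : ∀ S ∈ u.powerset, μ (C S) =
      (F e.1 (Set.Ioi x) * ENNReal.ofReal (a-b)) *
      ((∏ f ∈ S, (F f.1 (Set.Ioi τ) * ENNReal.ofReal (1 - a))) *
        ∏ f ∈ u \ S, F f.1 (Set.Iic τ)) := by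
    intro S hSp
    have hSu : S ⊆ u := Finset.mem_powerset.mp hSp
    have heS : e ∉ S := fun h => (Finset.mem_erase.mp (hSu h)).1 rfl
    set T : Finset ((Fin n × Fin k) ⊕ (Fin n × Fin k)) :=
      Finset.univ.map ⟨Sum.inl, Sum.inl_injective⟩ ∪
        (insert e S).map ⟨Sum.inr, Sum.inr_injective⟩ with hT
    set sets : ((Fin n × Fin k) ⊕ (Fin n × Fin k)) → Set ℝ :=
      Sum.elim (fun f => if f = e then Set.Ioi x else if f ∈ S then Set.Ioi τ else Set.Iic τ)
               (fun f => if f = e then Set.Ioc b a else Set.Ioi a) with hsets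
    have hsetsm : ∀ i ∈ T, MeasurableSet (sets i) := by
      rintro (f | f) _ <;> simp only [hsets, Sum.elim_inl, Sum.elim_inr] <;> split_ifs <;>
        first
          | exact measurableSet_Ioi
          | exact measurableSet_Iic
          | exact measurableSet_Ioc
    have hinlT : ∀ f : Fin n × Fin k, (Sum.inl f : (Fin n × Fin k) ⊕ (Fin n × Fin k)) ∈ T := by
      intro f
      exact Finset.mem_union_left _ (Finset.mem_map.mpr ⟨f, Finset.mem_univ f, rfl⟩)
    have hinrT : ∀ f ∈ insert e S, (Sum.inr f : (Fin n × Fin k) ⊕ (Fin n × Fin k)) ∈ T := by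
      intro f hf
      exact Finset.mem_union_right _ (Finset.mem_map.mpr ⟨f, hf, rfl⟩)
    have hCeq : C S = ⋂ i ∈ T,
        (Sum.elim (fun p : Fin n × Fin k => V p.1 p.2)
          (fun p : Fin n × Fin k => t p.1 p.2)) i ⁻¹' sets i := by
      ext ω
      constructor
      · rintro ⟨⟨⟨h1, h2⟩, h3⟩, h4⟩
        refine Set.mem_iInter₂.mpr ?_
        rintro (f | f) hi
        · simp only [Sum.elim_inl, hsets, Set.mem_preimage]
          by_cases hfe : f = e
          · subst hfe; rw [if_pos rfl]; exact h1
          · rw [if_neg hfe]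
            by_cases hfS : f ∈ S
            · rw [if_pos hfS]; exact (Set.mem_iInter₂.mp h3 f hfS).1
            · rw [if_neg hfS]
              exact Set.mem_iInter₂.mp h4 f (Finset.mem_sdiff.mpr
                ⟨Finset.mem_erase.mpr ⟨hfe, Finset.mem_univ f⟩, hfS⟩)
        · have hf : f ∈ insert e S := by
            rcases Finset.mem_union.mp hi with hi2 | hi2
            · obtain ⟨g, _, hg⟩ := Finset.mem_map.mp hi2
              exact absurd hg (by simp)
            · obtain ⟨g, hgm, hg⟩ := Finset.mem_map.mp hi2
              have : g = f := by simpa using hg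
              exact this ▸ hgm
          simp only [Sum.elim_inr, hsets, Set.mem_preimage]
          by_cases hfe : f = e
          · subst hfe; rw [if_pos rfl]; exact h2
          · rw [if_neg hfe]
            have hfS : f ∈ S := Finset.mem_of_mem_insert_of_ne hf hfe
            exact (Set.mem_iInter₂.mp h3 f hfS).2
      · intro h
        have h2 := Set.mem_iInter₂.mp h
        have hV : ∀ f : Fin n × Fin k, V f.1 f.2 ω ∈
            (if f = e then Set.Ioi x else if f ∈ S then Set.Ioi τ else Set.Iic τ) :=
          fun f => h2 (Sum.inl f) (hinlT f)
        have ht2 : ∀ f ∈ insert e S, t f.1 f.2 ω ∈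
            (if f = e then Set.Ioc b a else Set.Ioi a) :=
          fun f hf => h2 (Sum.inr f) (hinrT f hf)
        refine ⟨⟨⟨?_, ?_⟩, ?_⟩, ?_⟩
        · have := hV e; rwa [if_pos rfl] at this
        · have := ht2 e (Finset.mem_insert_self e S); rwa [if_pos rfl] at this
        · refine Set.mem_iInter₂.mpr fun f hfS => ?_
          have hfe : f ≠ e := fun hh => heS (hh ▸ hfS)
          refine ⟨?_, ?_⟩
          · have := hV f; rwa [if_neg hfe, if_pos hfS] at this
          · have := ht2 f (Finset.mem_insert_of_mem hfS); rwa [if_neg hfe] at this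
        · refine Set.mem_iInter₂.mpr fun f hf => ?_
          obtain ⟨hfu, hfS⟩ := Finset.mem_sdiff.mp hf
          have hfe : f ≠ e := (Finset.mem_erase.mp hfu).1
          have := hV f; rwa [if_neg hfe, if_neg hfS] at this
    have hTdisj : Disjoint (Finset.univ.map ⟨Sum.inl, Sum.inl_injective⟩)
        ((insert e S).map ⟨Sum.inr, Sum.inr_injective⟩ :
          Finset ((Fin n × Fin k) ⊕ (Fin n × Fin k))) := by
      rw [Finset.disjoint_left]
      rintro i hi1 hi2
      obtain ⟨f, _, rfl⟩ := Finset.mem_map.mp hi1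
      obtain ⟨g, _, hg⟩ := Finset.mem_map.mp hi2
      exact absurd hg (by simp)
    rw [hCeq, hprod T hsetsm, hT, Finset.prod_union hTdisj, Finset.prod_map, Finset.prod_map]
    simp only [Function.Embedding.coeFn_mk, Sum.elim_inl, Sum.elim_inr]
    rw [← Finset.mul_prod_erase Finset.univ _ (Finset.mem_univ e), ← hu]
    rw [Finset.prod_insert heS]
    have he1 : μ (V e.1 e.2 ⁻¹' sets (Sum.inl e)) = F e.1 (Set.Ioi x) := by
      simp only [hsets, Sum.elim_inl, if_pos rfl]
      exact hVm e _ measurableSet_Ioi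
    have he2 : μ (t e.1 e.2 ⁻¹' sets (Sum.inr e)) = ENNReal.ofReal (a - b) := by
      simp only [hsets, Sum.elim_inr, if_pos rfl]
      exact htIoc e
    have hu1 : ∀ f ∈ u, μ (V f.1 f.2 ⁻¹' sets (Sum.inl f)) =
        if f ∈ S then F f.1 (Set.Ioi τ) else F f.1 (Set.Iic τ) := by
      intro f hf
      have hfe : f ≠ e := (Finset.mem_erase.mp hf).1
      simp only [hsets, Sum.elim_inl, if_neg hfe]
      by_cases hfS : f ∈ S
      · rw [if_pos hfS, if_pos hfS]; exact hVm f _ measurableSet_Ioi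
      · rw [if_neg hfS, if_neg hfS]; exact hVm f _ measurableSet_Iic
    have hu2 : ∀ f ∈ S, μ (t f.1 f.2 ⁻¹' sets (Sum.inr f)) = ENNReal.ofReal (1 - a) := by
      intro f hf
      have hfe : f ≠ e := fun hh => heS (hh ▸ hf)
      simp only [hsets, Sum.elim_inr, if_neg hfe]
      exact htIoi f
    rw [he1, he2, Finset.prod_congr rfl hu1, Finset.prod_congr rfl hu2]
    have hsplit : (∏ f ∈ u, if f ∈ S then F f.1 (Set.Ioi τ) else F f.1 (Set.Iic τ))
        = (∏ f ∈ S, F f.1 (Set.Ioi τ)) * ∏ f ∈ u \ S, F f.1 (Set.Iic τ) := by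
      rw [← Finset.prod_filter_mul_prod_filter_not u (· ∈ S)]
      congr 1
      · rw [Finset.prod_congr rfl (fun f hf => if_pos (Finset.mem_filter.mp hf).2)]
        congr 1
        rw [Finset.filter_mem_eq_inter, Finset.inter_eq_right.mpr hSu]
      · rw [Finset.prod_congr rfl (fun f hf => if_neg (Finset.mem_filter.mp hf).2)]
        congr 1
        rw [Finset.sdiff_eq_filter]
    rw [hsplit, Finset.prod_const, Finset.prod_mul_distrib, Finset.prod_const]
    ring
  rw [Finset.sum_congr rfl hCval, ← Finset.mul_sum, ← Finset.prod_add]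
lemma stmt6_tail
    (ε : ℝ) (hε1 : ε ≤ 1)
    (k : ℕ) (hk0 : 0 < k) (hεk : Real.exp (-(k:ℝ)/2) ≤ ε)
    (n : ℕ) (hn : 0 < n)
    (Ω : Type*) [MeasurableSpace Ω] (μ : Measure Ω) [IsProbabilityMeasure μ]
    (F : Fin n → Measure ℝ) (hFprob : ∀ i, IsProbabilityMeasure (F i))
    (V : Fin n → Fin k → Ω → ℝ) (t : Fin n → Fin k → Ω → ℝ)
    (hmV : ∀ i j, Measurable (V i j)) (hmt : ∀ i j, Measurable (t i j))
    (hVdist : ∀ i j, Measure.map (V i j) μ = F i)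
    (htdist : ∀ i j, Measure.map (t i j) μ = volume.restrict (Set.Icc (0:ℝ) 1))
    (hindep : iIndepFun
      (Sum.elim (fun p : Fin n × Fin k => V p.1 p.2) (fun p : Fin n × Fin k => t p.1 p.2)) μ)
    (OPT : Ω → ℝ)
    (hOPT : ∀ ω, OPT ω =
      Finset.univ.sup' ⟨⟨0, hn⟩, Finset.mem_univ _⟩ (fun i => V i ⟨0, hk0⟩ ω))
    (τ : ℝ) (hτ : 0 ≤ τ)
    (hmed : μ {ω | OPT ω ≤ τ} = 1/2)
    (ALG : Ω → ℝ)
    (hALGsel : ∀ᵐ ω ∂μ, ∀ p : Fin n × Fin k, τ < V p.1 p.2 ω →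
      (∀ q : Fin n × Fin k, τ < V q.1 q.2 ω → t p.1 p.2 ω ≤ t q.1 q.2 ω) →
      ALG ω = V p.1 p.2 ω)
    (x : ℝ) (hx : 0 ≤ x) :
    (1 - ε) * (μ {ω | x < OPT ω}).toReal ≤ (μ {ω | x < ALG ω}).toReal := by
  classical
  have hprod := iIndepFun_iff_measure_inter_preimage_eq_mul.mp hindep
  have hVm : ∀ (f : Fin n × Fin k) (s : Set ℝ), MeasurableSet s →
      μ (V f.1 f.2 ⁻¹' s) = F f.1 s := by
    intro f s hs
    rw [← hVdist f.1 f.2, Measure.map_apply (hmV f.1 f.2) hs]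
  set j0 : Fin k := ⟨0, hk0⟩ with hj0
  have hOPTset : ∀ c : ℝ, {ω | OPT ω ≤ c} = ⋂ i : Fin n, V i j0 ⁻¹' Set.Iic c := by
    intro c; ext ω
    simp only [Set.mem_setOf_eq, hOPT ω, Finset.sup'_le_iff, Set.mem_iInter, Set.mem_preimage,
      Set.mem_Iic, Finset.mem_univ, true_implies, forall_const]
    exact (Finset.sup'_le_iff _ _).trans (by simp)
  have hOPTprod : ∀ c : ℝ, μ {ω | OPT ω ≤ c} = ∏ i, F i (Set.Iic c) := by
    intro c
    have hset : (⋂ i : Fin n, V i j0 ⁻¹' Set.Iic c) =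
        ⋂ b ∈ Finset.univ.map ⟨fun i : Fin n =>
            (Sum.inl (i, j0) : (Fin n × Fin k) ⊕ (Fin n × Fin k)),
            fun a b h => by simpa using h⟩,
          (Sum.elim (fun p : Fin n × Fin k => V p.1 p.2)
            (fun p : Fin n × Fin k => t p.1 p.2)) b ⁻¹' Set.Iic c := by
      ext ω
      simp
      exact Iff.rfl
    rw [hOPTset c, hset, hprod _ (fun b _ => measurableSet_Iic), Finset.prod_map]
    exact Finset.prod_congr rfl fun i _ => hVm (i, j0) _ measurableSet_Iic
  have hcompIic : ∀ (i : Fin n) (c : ℝ), F i (Set.Ioi c) + F i (Set.Iic c) = 1 := by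
    intro i c
    haveI := hFprob i
    rw [← Set.compl_Ioi]
    have h := measure_add_measure_compl (μ := F i) (s := Set.Ioi c) measurableSet_Ioi
    rwa [measure_univ] at h
  have hIicR : ∀ (i : Fin n) (c : ℝ),
      (F i (Set.Iic c)).toReal = 1 - (F i (Set.Ioi c)).toReal := by
    intro i c
    have h2 : (F i (Set.Ioi c)).toReal + (F i (Set.Iic c)).toReal = 1 := by
      rw [← ENNReal.toReal_add (measure_ne_top _ _) (measure_ne_top _ _), hcompIic i c,
        ENNReal.toReal_one]
    linarith
  have hmedprod : ∏ i, F i (Set.Iic τ) = 1/2 := by rw [← hOPTprod, hmed]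
  have hmedR : ∏ i, (F i (Set.Iic τ)).toReal = 1/2 := by
    rw [← ENNReal.toReal_prod, hmedprod]
    simp
  have hTOPT : (μ {ω | x < OPT ω}).toReal = 1 - ∏ i, (F i (Set.Iic x)).toReal := by
    have hc : {ω | x < OPT ω} = {ω | OPT ω ≤ x}ᶜ := by
      ext ω; simp [not_le]
    have hm : MeasurableSet {ω | OPT ω ≤ x} := by
      rw [hOPTset]
      exact MeasurableSet.iInter fun i => hmV i j0 measurableSet_Iic
    have hadd : (μ {ω | OPT ω ≤ x}).toReal + (μ ({ω | OPT ω ≤ x}ᶜ)).toReal = 1 := by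
      rw [← ENNReal.toReal_add (measure_ne_top _ _) (measure_ne_top _ _),
        measure_add_measure_compl hm]
      simp
    rw [hc]
    rw [hOPTprod x, ENNReal.toReal_prod] at hadd
    linarith
  have hprobR : ∀ (i : Fin n) (s : Set ℝ), (F i s).toReal ≤ 1 := by
    intro i s
    haveI := hFprob i
    simpa using ENNReal.toReal_mono ENNReal.one_ne_top prob_le_one
  have hpmeasnn : ∀ (i : Fin n) (s : Set ℝ), 0 ≤ (F i s).toReal := fun i s => ENNReal.toReal_nonneg
  rcases le_or_gt x τ with hxτ | hτx
  · -- case x ≤ τ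
    have hIval : μ (⋂ e : Fin n × Fin k, V e.1 e.2 ⁻¹' Set.Iic τ) = (1/2 : ℝ≥0∞)^k := by
      have hset : (⋂ e : Fin n × Fin k, V e.1 e.2 ⁻¹' Set.Iic τ) =
          ⋂ b ∈ Finset.univ.map ⟨Sum.inl, Sum.inl_injective⟩,
            (Sum.elim (fun p : Fin n × Fin k => V p.1 p.2)
              (fun p : Fin n × Fin k => t p.1 p.2)) b ⁻¹' Set.Iic τ := by
        ext ω
        simp
      rw [hset, hprod _ (fun b _ => measurableSet_Iic), Finset.prod_map]
      simp only [Function.Embedding.coeFn_mk, Sum.elim_inl]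
      have : ∀ e : Fin n × Fin k, μ (V e.1 e.2 ⁻¹' Set.Iic τ) = F e.1 (Set.Iic τ) :=
        fun e => hVm e _ measurableSet_Iic
      rw [Finset.prod_congr rfl fun e _ => this e, Fintype.prod_prod_type]
      simp_rw [Finset.prod_const, Finset.card_univ, Fintype.card_fin]
      rw [Finset.prod_pow, hmedprod]
    have hImeas : MeasurableSet (⋂ e : Fin n × Fin k, V e.1 e.2 ⁻¹' Set.Iic τ) :=
      MeasurableSet.iInter fun e => hmV e.1 e.2 measurableSet_Iic
    have hsub : ∀ᵐ ω ∂μ, ω ∈ (⋂ e : Fin n × Fin k, V e.1 e.2 ⁻¹' Set.Iic τ)ᶜ →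
        ω ∈ {ω | x < ALG ω} := by
      filter_upwards [hALGsel] with ω hsel hmem
      simp only [Set.mem_compl_iff, Set.mem_iInter, Set.mem_preimage, Set.mem_Iic,
        not_forall, not_le] at hmem
      obtain ⟨e0, he0⟩ := hmem
      have hne : (Finset.univ.filter (fun e : Fin n × Fin k => τ < V e.1 e.2 ω)).Nonempty :=
        ⟨e0, Finset.mem_filter.mpr ⟨Finset.mem_univ _, he0⟩⟩
      obtain ⟨p0, hp0mem, hp0min⟩ :=
        Finset.exists_min_image _ (fun e : Fin n × Fin k => t e.1 e.2 ω) hne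
      have hp0 : τ < V p0.1 p0.2 ω := (Finset.mem_filter.mp hp0mem).2
      have hALGeq : ALG ω = V p0.1 p0.2 ω :=
        hsel p0 hp0 (fun q hq => hp0min q (Finset.mem_filter.mpr ⟨Finset.mem_univ _, hq⟩))
      show x < ALG ω
      rw [hALGeq]
      exact lt_of_le_of_lt hxτ hp0
    have hge : μ ((⋂ e : Fin n × Fin k, V e.1 e.2 ⁻¹' Set.Iic τ)ᶜ) ≤ μ {ω | x < ALG ω} :=
      measure_mono_ae hsub
    have haddI : (μ (⋂ e : Fin n × Fin k, V e.1 e.2 ⁻¹' Set.Iic τ)).toReal +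
        (μ ((⋂ e : Fin n × Fin k, V e.1 e.2 ⁻¹' Set.Iic τ)ᶜ)).toReal = 1 := by
      rw [← ENNReal.toReal_add (measure_ne_top _ _) (measure_ne_top _ _),
        measure_add_measure_compl hImeas]
      simp
    have hIR : (μ (⋂ e : Fin n × Fin k, V e.1 e.2 ⁻¹' Set.Iic τ)).toReal = (1/2:ℝ)^k := by
      rw [hIval, ENNReal.toReal_pow]
      norm_num
    have hup : 1 - (1/2:ℝ)^k ≤ (μ {ω | x < ALG ω}).toReal := by
      have h := ENNReal.toReal_mono (measure_ne_top μ _) hge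
      linarith
    have hTle : (μ {ω | x < OPT ω}).toReal ≤ 1 := by
      simpa using ENNReal.toReal_mono ENNReal.one_ne_top (prob_le_one (μ := μ))
    have h2ε : (1/2:ℝ)^k ≤ ε := le_trans (pow_half_le_exp k) hεk
    have hT0 : (0:ℝ) ≤ (μ {ω | x < OPT ω}).toReal := ENNReal.toReal_nonneg
    nlinarith
  · -- case τ < x
    have hkR : (0:ℝ) < 3*(k:ℝ) := by positivity
    set a : ℕ → ℝ := fun l => ((l:ℝ)+1)/(3*(k:ℝ)) with hadef
    set B : (Fin n × Fin k) × ℕ → Set Ω := fun el =>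
      (V el.1.1 el.1.2 ⁻¹' Set.Ioi x) ∩
      (t el.1.1 el.1.2 ⁻¹' Set.Ioc ((el.2:ℝ)/(3*(k:ℝ))) (a el.2)) ∩
      ⋂ f ∈ Finset.univ.erase el.1,
        ((V f.1 f.2 ⁻¹' Set.Iic τ) ∪ (t f.1 f.2 ⁻¹' Set.Ioi (a el.2))) with hBdef
    have ha0 : ∀ l : ℕ, 0 ≤ a l := by
      intro l
      rw [hadef]
      positivity
    have ha1 : ∀ l ∈ Finset.range (3*k), a l ≤ 1 := by
      intro l hl
      rw [hadef]
      rw [div_le_one hkR]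
      have h1 : (l:ℝ) + 1 ≤ ((3*k : ℕ):ℝ) := by
        exact_mod_cast Nat.succ_le_of_lt (Finset.mem_range.mp hl)
      calc (l:ℝ) + 1 ≤ ((3*k : ℕ):ℝ) := h1
        _ = 3*(k:ℝ) := by push_cast; ring
    have hamono : ∀ l l' : ℕ, l ≤ l' → a l ≤ a l' := by
      intro l l' h
      simp only [hadef]
      gcongr
    have hble : ∀ l : ℕ, (l:ℝ)/(3*(k:ℝ)) ≤ a l := by
      intro l
      simp only [hadef]
      gcongr
      linarith
    set EL : Finset ((Fin n × Fin k) × ℕ) := Finset.univ ×ˢ Finset.range (3*k) with hELdef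
    have hBval : ∀ el ∈ EL, μ (B el) =
        F el.1.1 (Set.Ioi x) * ENNReal.ofReal (1/(3*(k:ℝ))) *
        ∏ f ∈ Finset.univ.erase el.1,
          (F f.1 (Set.Ioi τ) * ENNReal.ofReal (1 - a el.2) + F f.1 (Set.Iic τ)) := by
      rintro ⟨e, l⟩ hel
      have hl : l ∈ Finset.range (3*k) := (Finset.mem_product.mp hel).2
      have h := grid_cell_measure F V t hmV hmt hVdist htdist hindep τ x (a l)
        ((l:ℝ)/(3*(k:ℝ))) (by positivity) (hble l) (ha1 l hl) e
      have hab : a l - (l:ℝ)/(3*(k:ℝ)) = 1/(3*(k:ℝ)) := by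
        simp only [hadef]
        rw [div_sub_div_same]
        norm_num
      simp only [hBdef]
      rw [h, hab]
    have hBdisj : Set.PairwiseDisjoint
        (↑(EL : Finset ((Fin n × Fin k) × ℕ))) B := by
      have key1 : ∀ (e : Fin n × Fin k) (l l' : ℕ), l < l' → Disjoint (B (e,l)) (B (e,l')) := by
        intro e l l' hll
        rw [Set.disjoint_left]
        simp only [hBdef]
        rintro ω ⟨⟨_, h2⟩, _⟩ ⟨⟨_, h2'⟩, _⟩
        have ht1 : t e.1 e.2 ω ≤ a l := (Set.mem_Ioc.mp h2).2
        have ht2 : (l':ℝ)/(3*(k:ℝ)) < t e.1 e.2 ω := (Set.mem_Ioc.mp h2').1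
        have hle : a l ≤ (l':ℝ)/(3*(k:ℝ)) := by
          simp only [hadef]
          gcongr
          exact_mod_cast Nat.succ_le_of_lt hll
        linarith
      have key2 : ∀ (e e' : Fin n × Fin k) (l l' : ℕ), e ≠ e' → l ≤ l' →
          Disjoint (B (e,l)) (B (e',l')) := by
        intro e e' l l' hee hll
        rw [Set.disjoint_left]
        simp only [hBdef]
        rintro ω ⟨⟨h1, h2⟩, _⟩ ⟨⟨_, _⟩, h3'⟩
        have hmem : e ∈ Finset.univ.erase e' := Finset.mem_erase.mpr ⟨hee, Finset.mem_univ _⟩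
        rcases Set.mem_iInter₂.mp h3' e hmem with hV | ht'
        · have hVle : V e.1 e.2 ω ≤ τ := Set.mem_Iic.mp hV
          have hVgt : x < V e.1 e.2 ω := Set.mem_Ioi.mp h1
          linarith
        · have hgt : a l' < t e.1 e.2 ω := Set.mem_Ioi.mp ht'
          have hle2 : t e.1 e.2 ω ≤ a l := (Set.mem_Ioc.mp h2).2
          have := hamono l l' hll
          linarith
      rintro ⟨e, l⟩ hel ⟨e', l'⟩ hel' hne
      rcases eq_or_ne e e' with rfl | hee
      · have hll : l ≠ l' := by
          intro h
          exact hne (by rw [h])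
        rcases lt_or_gt_of_ne hll with h | h
        · exact key1 e l l' h
        · exact (key1 e l' l h).symm
      · rcases le_or_gt l l' with h | h
        · exact key2 e e' l l' hee h
        · exact (key2 e' e l' l (Ne.symm hee) h.le).symm
    have hBmeas : ∀ el ∈ EL, MeasurableSet (B el) := by
      intro el _
      simp only [hBdef]
      exact (((hmV _ _) measurableSet_Ioi).inter ((hmt _ _) measurableSet_Ioc)).inter
        (MeasurableSet.biInter (Set.to_countable _) fun f _ =>
          (((hmV _ _) measurableSet_Iic).union ((hmt _ _) measurableSet_Ioi)))
    have hUnion : μ (⋃ el ∈ EL, B el)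
        = ∑ el ∈ EL, μ (B el) :=
      measure_biUnion_finset hBdisj hBmeas
    have hsub : ∀ᵐ ω ∂μ, ω ∈ (⋃ el ∈ EL, B el) →
        ω ∈ {ω | x < ALG ω} := by
      filter_upwards [hALGsel] with ω hsel hmem
      simp only [Set.mem_iUnion, exists_prop] at hmem
      obtain ⟨⟨e, l⟩, hel, hmem⟩ := hmem
      simp only [hBdef] at hmem
      obtain ⟨⟨h1, h2⟩, h3⟩ := hmem
      have hx1 : x < V e.1 e.2 ω := Set.mem_Ioi.mp h1
      have hτ1 : τ < V e.1 e.2 ω := lt_trans hτx hx1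
      have hALGeq : ALG ω = V e.1 e.2 ω := by
        refine hsel e hτ1 (fun q hq => ?_)
        rcases eq_or_ne q e with rfl | hqe
        · exact le_refl _
        · have hqmem : q ∈ Finset.univ.erase e := Finset.mem_erase.mpr ⟨hqe, Finset.mem_univ _⟩
          rcases Set.mem_iInter₂.mp h3 q hqmem with hV | ht'
          · exact absurd (Set.mem_Iic.mp hV) (not_le.mpr hq)
          · have hgt : a l < t q.1 q.2 ω := ht'
            have h22 : t e.1 e.2 ω ≤ a l := h2.2
            linarith
      show x < ALG ω
      rw [hALGeq]
      exact hx1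
    have hgeENN : ∑ el ∈ EL, μ (B el) ≤ μ {ω | x < ALG ω} := by
      rw [← hUnion]
      exact measure_mono_ae hsub
    have hBR : ∀ el ∈ EL, (μ (B el)).toReal =
        (F el.1.1 (Set.Ioi x)).toReal * (1/(3*(k:ℝ))) *
        ∏ f ∈ Finset.univ.erase el.1, (1 - (F f.1 (Set.Ioi τ)).toReal * a el.2) := by
      intro el hel
      have hl : el.2 ∈ Finset.range (3*k) := (Finset.mem_product.mp hel).2
      rw [hBval el hel, ENNReal.toReal_mul, ENNReal.toReal_mul, ENNReal.toReal_prod,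
        ENNReal.toReal_ofReal (by positivity)]
      congr 1
      refine Finset.prod_congr rfl fun g _ => ?_
      rw [ENNReal.toReal_add (ENNReal.mul_ne_top (measure_ne_top _ _) ENNReal.ofReal_ne_top)
        (measure_ne_top _ _), ENNReal.toReal_mul,
        ENNReal.toReal_ofReal (by linarith [ha1 el.2 hl]), hIicR g.1 τ]
      ring
    set r : ℝ := (1/2:ℝ) ^ ((1:ℝ)/3) with hrdef
    have hstep : ∀ el ∈ EL,
        r ^ (el.2+1) ≤ ∏ f ∈ (Finset.univ.erase el.1 : Finset (Fin n × Fin k)),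
          (1 - (F f.1 (Set.Ioi τ)).toReal * a el.2) := by
      rintro ⟨e, l⟩ hel
      have hl : l ∈ Finset.range (3*k) := (Finset.mem_product.mp hel).2
      have hal0 := ha0 l
      have hal1 := ha1 l hl
      have hterm : ∀ f : Fin n × Fin k, 0 ≤ 1 - (F f.1 (Set.Ioi τ)).toReal * a l := by
        intro f
        nlinarith [hprobR f.1 (Set.Ioi τ), hpmeasnn f.1 (Set.Ioi τ)]
      have hBstep : ∏ f : Fin n × Fin k, (1 - (F f.1 (Set.Ioi τ)).toReal * a l)
          ≤ ∏ f ∈ Finset.univ.erase e, (1 - (F f.1 (Set.Ioi τ)).toReal * a l) := by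
        rw [← Finset.mul_prod_erase Finset.univ _ (Finset.mem_univ e)]
        have hp : 0 ≤ ∏ f ∈ Finset.univ.erase e, (1 - (F f.1 (Set.Ioi τ)).toReal * a l) :=
          Finset.prod_nonneg fun f _ => hterm f
        exact mul_le_of_le_one_left hp (by nlinarith [hpmeasnn e.1 (Set.Ioi τ), hal0])
      have hprodtype : ∏ f : Fin n × Fin k, (1 - (F f.1 (Set.Ioi τ)).toReal * a l)
          = ∏ i : Fin n, (1 - (F i (Set.Ioi τ)).toReal * a l)^k := by
        rw [Fintype.prod_prod_type]
        simp [Finset.prod_const, Finset.card_univ]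
      have hbern : ∀ i : Fin n,
          ((F i (Set.Iic τ)).toReal) ^ (a l) ≤ 1 - (F i (Set.Ioi τ)).toReal * a l := by
        intro i
        rw [hIicR i τ]
        exact bern_aux (hpmeasnn i _) (hprobR i _) hal0 hal1
      have hprod_rpow : ((1/2:ℝ) ^ (a l)) = ∏ i : Fin n, ((F i (Set.Iic τ)).toReal) ^ (a l) := by
        rw [Real.finset_prod_rpow _ _ (fun i _ => hpmeasnn i _) (a l), hmedR]
      have h12 : (1/2:ℝ) ^ (a l) ≤ ∏ i : Fin n, (1 - (F i (Set.Ioi τ)).toReal * a l) := by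
        rw [hprod_rpow]
        exact Finset.prod_le_prod (fun i _ => Real.rpow_nonneg (hpmeasnn i _) _)
          (fun i _ => hbern i)
      have hrk : r ^ (l+1) = ((1/2:ℝ) ^ (a l)) ^ k := by
        rw [hrdef, ← Real.rpow_natCast ((1/2:ℝ) ^ ((1:ℝ)/3)) (l+1),
          ← Real.rpow_mul (by norm_num), ← Real.rpow_natCast ((1/2:ℝ) ^ (a l)) k,
          ← Real.rpow_mul (by norm_num)]
        congr 1
        simp only [hadef]
        field_simp
        push_cast
        ring
      calc r ^ (l+1) = ((1/2:ℝ) ^ (a l)) ^ k := hrk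
        _ ≤ (∏ i : Fin n, (1 - (F i (Set.Ioi τ)).toReal * a l)) ^ k :=
            pow_le_pow_left₀ (Real.rpow_nonneg (by norm_num) _) h12 k
        _ = ∏ f : Fin n × Fin k, (1 - (F f.1 (Set.Ioi τ)).toReal * a l) := by
            rw [hprodtype, Finset.prod_pow]
        _ ≤ _ := hBstep
    have hq0 : ∀ i : Fin n, 0 ≤ (F i (Set.Ioi x)).toReal := fun i => ENNReal.toReal_nonneg
    have hlow : ∀ el ∈ EL,
        (F el.1.1 (Set.Ioi x)).toReal * ((1/(3*(k:ℝ))) * r ^ (el.2+1)) ≤ (μ (B el)).toReal := by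
      intro el hel
      rw [hBR el hel]
      have hst := hstep el hel
      have h3k : (0:ℝ) ≤ 1/(3*(k:ℝ)) := by positivity
      calc (F el.1.1 (Set.Ioi x)).toReal * ((1/(3*(k:ℝ))) * r ^ (el.2+1))
          ≤ (F el.1.1 (Set.Ioi x)).toReal * ((1/(3*(k:ℝ))) *
            ∏ f ∈ Finset.univ.erase el.1, (1 - (F f.1 (Set.Ioi τ)).toReal * a el.2)) := by
            exact mul_le_mul_of_nonneg_left (mul_le_mul_of_nonneg_left hst h3k) (hq0 _)
        _ = (F el.1.1 (Set.Ioi x)).toReal * (1/(3*(k:ℝ))) *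
            ∏ f ∈ Finset.univ.erase el.1, (1 - (F f.1 (Set.Ioi τ)).toReal * a el.2) := by
            ring
    have hsum1 : ∑ el ∈ EL,
        (F el.1.1 (Set.Ioi x)).toReal * ((1/(3*(k:ℝ))) * r ^ (el.2+1))
        ≤ ∑ el ∈ EL, (μ (B el)).toReal :=
      Finset.sum_le_sum hlow
    have hsum2 : ∑ el ∈ EL,
        (F el.1.1 (Set.Ioi x)).toReal * ((1/(3*(k:ℝ))) * r ^ (el.2+1))
        = (∑ i : Fin n, (F i (Set.Ioi x)).toReal) *
          ((k:ℝ) * ∑ l ∈ Finset.range (3*k), (1/(3*(k:ℝ))) * r ^ (l+1)) := by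
      rw [hELdef, Finset.sum_product]
      dsimp only
      have hinner : ∀ e : Fin n × Fin k,
          ∑ l ∈ Finset.range (3*k), (F e.1 (Set.Ioi x)).toReal * ((1/(3*(k:ℝ))) * r^(l+1))
          = (F e.1 (Set.Ioi x)).toReal *
            ∑ l ∈ Finset.range (3*k), (1/(3*(k:ℝ))) * r^(l+1) :=
        fun e => by rw [Finset.mul_sum]
      rw [Finset.sum_congr rfl (fun e _ => hinner e), ← Finset.sum_mul]
      have hsplit : ∑ e : Fin n × Fin k, (F e.1 (Set.Ioi x)).toReal
          = (k:ℝ) * ∑ i, (F i (Set.Ioi x)).toReal := by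
        rw [Fintype.sum_prod_type]
        simp only [Finset.sum_const, Finset.card_univ, Fintype.card_fin, nsmul_eq_mul]
        rw [Finset.mul_sum]
      rw [hsplit]
      ring
    have hOPTbound : (μ {ω | x < OPT ω}).toReal ≤ ∑ i, (F i (Set.Ioi x)).toReal := by
      rw [hTOPT]
      have hw := weier Finset.univ (fun i => (F i (Set.Ioi x)).toReal)
        (fun i _ => hq0 i) (fun i _ => hprobR i _)
      have hpr : ∏ i, (F i (Set.Iic x)).toReal = ∏ i, (1 - (F i (Set.Ioi x)).toReal) :=
        Finset.prod_congr rfl fun i _ => hIicR i x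
      rw [hpr]
      linarith
    have hknum := key_num k hk0
    have hsumq : (0:ℝ) ≤ ∑ i : Fin n, (F i (Set.Ioi x)).toReal :=
      Finset.sum_nonneg fun i _ => hq0 i
    have hfinal : ∑ el ∈ EL, (μ (B el)).toReal
        ≤ (μ {ω | x < ALG ω}).toReal := by
      have h := ENNReal.toReal_mono (measure_ne_top μ _) hgeENN
      rwa [ENNReal.toReal_sum (fun el _ => measure_ne_top μ _)] at h
    have hεS : (1-ε) ≤ (k:ℝ) * ∑ l ∈ Finset.range (3*k), (1/(3*(k:ℝ))) * r ^ (l+1) := by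
      refine le_trans ?_ hknum
      linarith
    calc (1-ε) * (μ {ω | x < OPT ω}).toReal
        ≤ (1-ε) * ∑ i, (F i (Set.Ioi x)).toReal := by
          apply mul_le_mul_of_nonneg_left hOPTbound
          have := Real.exp_pos (-(k:ℝ)/2)
          linarith
      _ ≤ ((k:ℝ) * ∑ l ∈ Finset.range (3*k), (1/(3*(k:ℝ))) * r ^ (l+1)) *
            ∑ i, (F i (Set.Ioi x)).toReal := by
          rw [mul_comm (1-ε), mul_comm ((k:ℝ) * ∑ l ∈ Finset.range (3*k), (1/(3*(k:ℝ))) * r ^ (l+1))]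
          exact mul_le_mul_of_nonneg_left hεS hsumq
      _ = (∑ i : Fin n, (F i (Set.Ioi x)).toReal) *
            ((k:ℝ) * ∑ l ∈ Finset.range (3*k), (1/(3*(k:ℝ))) * r ^ (l+1)) := by ring
      _ = ∑ el ∈ EL,
            (F el.1.1 (Set.Ioi x)).toReal * ((1/(3*(k:ℝ))) * r ^ (el.2+1)) := hsum2.symm
      _ ≤ ∑ el ∈ EL, (μ (B el)).toReal := hsum1
      _ ≤ (μ {ω | x < ALG ω}).toReal := hfinal
/-- **Theorem 3.1, upper bound.** In the continuous-time prophet secretary setup with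
`k = ⌈2 ln(1/ε)⌉` copies, the single-threshold algorithm whose constant threshold `τ` is the
median of `OPT = max_i V_{i,1}` satisfies `P(ALG > x) ≥ (1−ε)·P(OPT > x)` for every `x ≥ 0`,
and consequently `E[ALG] ≥ (1−ε)·E[OPT]`. -/
theorem stmt6
    (ε : ℝ) (hε : 0 < ε) (hε' : ε ≤ 1 / Real.exp 1)
    (k : ℕ) (hkdef : k = ⌈2 * Real.log (1 / ε)⌉₊) (hk0 : 0 < k)
    (n : ℕ) (hn : 0 < n)
    (Ω : Type*) [MeasurableSpace Ω] (μ : Measure Ω) [IsProbabilityMeasure μ]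
    -- the reward distributions: Borel probability measures on [0,∞) with continuous CDFs
    (F : Fin n → Measure ℝ) (hFprob : ∀ i, IsProbabilityMeasure (F i))
    (hFsupp : ∀ i, F i (Set.Iio 0) = 0)
    (hFcont : ∀ i, Continuous fun x : ℝ => (F i (Set.Iic x)).toReal)
    -- the rewards and their arrival times
    (V : Fin n → Fin k → Ω → ℝ) (t : Fin n → Fin k → Ω → ℝ)
    (hmV : ∀ i j, Measurable (V i j)) (hmt : ∀ i j, Measurable (t i j))
    (hVdist : ∀ i j, Measure.map (V i j) μ = F i)
    (htdist : ∀ i j, Measure.map (t i j) μ = volume.restrict (Set.Icc (0:ℝ) 1))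
    -- all the rewards and arrival times are mutually independent
    (hindep : iIndepFun
      (Sum.elim (fun p : Fin n × Fin k => V p.1 p.2) (fun p : Fin n × Fin k => t p.1 p.2)) μ)
    -- the offline benchmark OPT = max_{1 ≤ i ≤ n} V_{i,1}
    (OPT : Ω → ℝ)
    (hOPT : ∀ ω, OPT ω =
      Finset.univ.sup' ⟨⟨0, hn⟩, Finset.mem_univ _⟩ (fun i => V i ⟨0, hk0⟩ ω))
    -- the threshold: a nonnegative median of OPT
    (τ : ℝ) (hτ : 0 ≤ τ)
    (hmed : μ {ω | OPT ω ≤ τ} = 1/2)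
    -- ALG is the value of the single-threshold algorithm with constant threshold τ
    (ALG : Ω → ℝ) (hmALG : Measurable ALG)
    (hALGnone : ∀ᵐ ω ∂μ, (∀ p : Fin n × Fin k, ¬ τ < V p.1 p.2 ω) → ALG ω = 0)
    (hALGsel : ∀ᵐ ω ∂μ, ∀ p : Fin n × Fin k, τ < V p.1 p.2 ω →
      (∀ q : Fin n × Fin k, τ < V q.1 q.2 ω → t p.1 p.2 ω ≤ t q.1 q.2 ω) →
      ALG ω = V p.1 p.2 ω) :
    (∀ x : ℝ, 0 ≤ x →
        (1 - ε) * (μ {ω | x < OPT ω}).toReal ≤ (μ {ω | x < ALG ω}).toReal) ∧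
      (1 - ε) * ∫ ω, OPT ω ∂μ ≤ ∫ ω, ALG ω ∂μ := by
  classical
  have hexp1 : (1:ℝ) < Real.exp 1 := by
    have := Real.exp_one_gt_d9
    linarith
  have hε1 : ε ≤ 1 := by
    have : (1:ℝ)/Real.exp 1 ≤ 1 := by
      rw [div_le_one (by positivity)]
      linarith
    linarith
  have hεnn : (0:ℝ) ≤ 1 - ε := by linarith
  have hεk : Real.exp (-(k:ℝ)/2) ≤ ε := by
    have hkge : 2 * Real.log (1/ε) ≤ (k:ℝ) := by
      rw [hkdef]
      exact Nat.le_ceil _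
    have hlog : Real.log (1/ε) = -Real.log ε := by
      rw [one_div, Real.log_inv]
    have : -(k:ℝ)/2 ≤ Real.log ε := by
      rw [hlog] at hkge
      linarith
    calc Real.exp (-(k:ℝ)/2) ≤ Real.exp (Real.log ε) := Real.exp_le_exp.mpr this
      _ = ε := Real.exp_log hε
  have tail : ∀ x : ℝ, 0 ≤ x →
      (1 - ε) * (μ {ω | x < OPT ω}).toReal ≤ (μ {ω | x < ALG ω}).toReal :=
    fun x hx => stmt6_tail ε hε1 k hk0 hεk n hn Ω μ F hFprob V t hmV hmt hVdist htdist
      hindep OPT hOPT τ hτ hmed ALG hALGsel x hx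
  refine ⟨tail, ?_⟩
  set j0 : Fin k := ⟨0, hk0⟩ with hj0
  have hmOPT : Measurable OPT := by
    have hOPTfun : OPT = Finset.univ.sup' ⟨⟨0, hn⟩, Finset.mem_univ _⟩ (fun i => V i j0) := by
      funext ω
      rw [hOPT ω]
      exact (Finset.sup'_apply _ _ ω).symm
    rw [hOPTfun]
    exact Finset.measurable_sup' _ fun i _ => hmV i j0
  have hVae : ∀ᵐ ω ∂μ, ∀ e : Fin n × Fin k, 0 ≤ V e.1 e.2 ω := by
    rw [ae_all_iff]
    intro e
    have h0 : μ (V e.1 e.2 ⁻¹' Set.Iio 0) = 0 := by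
      rw [← Measure.map_apply (hmV e.1 e.2) measurableSet_Iio, hVdist e.1 e.2]
      exact hFsupp e.1
    have hset : {ω | ¬ 0 ≤ V e.1 e.2 ω} = V e.1 e.2 ⁻¹' Set.Iio 0 := by
      ext ω
      simp [not_le]
    rw [ae_iff, hset]
    exact h0
  have hOPTnn : 0 ≤ᵐ[μ] OPT := by
    filter_upwards [hVae] with ω hv
    have := hv (⟨0, hn⟩, j0)
    calc (0:ℝ) ≤ V ⟨0, hn⟩ j0 ω := this
      _ ≤ OPT ω := by
        rw [hOPT ω]
        exact Finset.le_sup' (fun i => V i j0 ω) (Finset.mem_univ _)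
  have hALGcases : ∀ᵐ ω ∂μ, ALG ω = 0 ∨
      ∃ e : Fin n × Fin k, τ < V e.1 e.2 ω ∧ ALG ω = V e.1 e.2 ω := by
    filter_upwards [hALGnone, hALGsel] with ω h0 hsel
    by_cases hex : ∃ e : Fin n × Fin k, τ < V e.1 e.2 ω
    · obtain ⟨e0, he0⟩ := hex
      have hne : (Finset.univ.filter fun e : Fin n × Fin k => τ < V e.1 e.2 ω).Nonempty :=
        ⟨e0, Finset.mem_filter.mpr ⟨Finset.mem_univ _, he0⟩⟩
      obtain ⟨p0, hp0mem, hp0min⟩ :=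
        Finset.exists_min_image _ (fun e : Fin n × Fin k => t e.1 e.2 ω) hne
      have hp0 := (Finset.mem_filter.mp hp0mem).2
      exact Or.inr ⟨p0, hp0, hsel p0 hp0
        (fun q hq => hp0min q (Finset.mem_filter.mpr ⟨Finset.mem_univ _, hq⟩))⟩
    · push_neg at hex
      exact Or.inl (h0 fun p => not_lt.mpr (hex p))
  have hALGnn : 0 ≤ᵐ[μ] ALG := by
    filter_upwards [hALGcases] with ω hc
    simp only [Pi.zero_apply]
    rcases hc with h | ⟨e, hgt, heq⟩
    · rw [h]
    · rw [heq]
      linarith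
  have hALGabs : ∀ᵐ ω ∂μ, |ALG ω| ≤ ∑ e : Fin n × Fin k, |V e.1 e.2 ω| := by
    filter_upwards [hALGcases] with ω hc
    rcases hc with h | ⟨e, hgt, heq⟩
    · rw [h, abs_zero]
      exact Finset.sum_nonneg fun e _ => abs_nonneg _
    · rw [heq]
      exact Finset.single_le_sum (f := fun e' : Fin n × Fin k => |V e'.1 e'.2 ω|)
        (fun e' _ => abs_nonneg _) (Finset.mem_univ e)
  by_cases hint : Integrable OPT μ
  · -- OPT integrable
    have hVint : ∀ e : Fin n × Fin k, Integrable (V e.1 e.2) μ := by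
      have hVj0 : ∀ i : Fin n, Integrable (V i j0) μ := by
        intro i
        refine hint.mono (hmV i j0).aestronglyMeasurable ?_
        filter_upwards [hVae, hOPTnn] with ω hv ho
        rw [Real.norm_eq_abs, Real.norm_eq_abs, abs_of_nonneg (hv (i, j0)), abs_of_nonneg ho]
        rw [hOPT ω]
        exact Finset.le_sup' (fun i' => V i' j0 ω) (Finset.mem_univ i)
      intro e
      have hid : Integrable (id : ℝ → ℝ) (F e.1) := by
        rw [← hVdist e.1 j0]
        exact (integrable_map_measure aestronglyMeasurable_id
          (hmV e.1 j0).aemeasurable).mpr (hVj0 e.1)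
      have := (integrable_map_measure aestronglyMeasurable_id
        (hmV e.1 e.2).aemeasurable).mp (by rwa [hVdist e.1 e.2])
      exact this
    have hALGint : Integrable ALG μ := by
      refine Integrable.mono (integrable_finset_sum Finset.univ
        (fun e _ => (hVint e).abs)) hmALG.aestronglyMeasurable ?_
      filter_upwards [hALGabs] with ω h
      rw [Real.norm_eq_abs, Real.norm_eq_abs,
        abs_of_nonneg (Finset.sum_nonneg fun (e : Fin n × Fin k) (_ : e ∈ Finset.univ) =>
          abs_nonneg (V e.1 e.2 ω))]
      exact h
    have hlcA : ∫⁻ ω, ENNReal.ofReal (ALG ω) ∂μ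
        = ∫⁻ y in Set.Ioi (0:ℝ), μ {ω | y < ALG ω} :=
      lintegral_eq_lintegral_meas_lt μ hALGnn hmALG.aemeasurable
    have hlcO : ∫⁻ ω, ENNReal.ofReal (OPT ω) ∂μ
        = ∫⁻ y in Set.Ioi (0:ℝ), μ {ω | y < OPT ω} :=
      lintegral_eq_lintegral_meas_lt μ hOPTnn hmOPT.aemeasurable
    have hmono : ∫⁻ y in Set.Ioi (0:ℝ), ENNReal.ofReal (1-ε) * μ {ω | y < OPT ω}
        ≤ ∫⁻ y in Set.Ioi (0:ℝ), μ {ω | y < ALG ω} := by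
      refine lintegral_mono_ae ?_
      refine (ae_restrict_iff' measurableSet_Ioi).mpr (Filter.Eventually.of_forall fun y hy => ?_)
      have htail := tail y (le_of_lt hy)
      calc ENNReal.ofReal (1-ε) * μ {ω | y < OPT ω}
          = ENNReal.ofReal ((1-ε) * (μ {ω | y < OPT ω}).toReal) := by
            rw [ENNReal.ofReal_mul hεnn, ENNReal.ofReal_toReal (measure_ne_top μ _)]
        _ ≤ ENNReal.ofReal ((μ {ω | y < ALG ω}).toReal) := ENNReal.ofReal_le_ofReal htail
        _ = μ {ω | y < ALG ω} := ENNReal.ofReal_toReal (measure_ne_top μ _)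
    have hAlt : ∫⁻ ω, ENNReal.ofReal (ALG ω) ∂μ < ⊤ := hALGint.lintegral_lt_top
    have h1 : ENNReal.ofReal (1-ε) * ∫⁻ ω, ENNReal.ofReal (OPT ω) ∂μ
        ≤ ∫⁻ ω, ENNReal.ofReal (ALG ω) ∂μ := by
      rw [hlcA, hlcO, ← lintegral_const_mul' _ _ ENNReal.ofReal_ne_top]
      exact hmono
    rw [integral_eq_lintegral_of_nonneg_ae hOPTnn hmOPT.aestronglyMeasurable,
      integral_eq_lintegral_of_nonneg_ae hALGnn hmALG.aestronglyMeasurable]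
    have h2 := ENNReal.toReal_mono hAlt.ne h1
    rw [ENNReal.toReal_mul, ENNReal.toReal_ofReal hεnn] at h2
    exact h2
  · -- OPT not integrable
    rw [integral_undef hint, mul_zero]
    exact integral_nonneg_of_ae hALGnn
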